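/- Let p be a prime, r \geq 1, j = \lceil r/2 \rceil, and let M be a symmetric n\times n integer matrix, a an integer coprime to p, and m \in \mathbb{Z}^n. Then |\sum_{b mod p^r} e_{p^r}(a b^T M b + b\cdot m)| \leq p^{n(r-j)} \cdot \#\{b_1 mod p^j : 2 a M b_1 + m \equiv 0 mod p^{r-j}\}. -/

import Mathlib

open scoped Real Classical

/-- `e_q(x) = e^{2πix/q}`. -/
noncomputable def eFun (q : ℕ) (x : ℤ) : ℂ :=
  Complex.exp (2 * π * Complex.I * x / q)

/-- The quadratic form `b ↦ bᵀ M b` attached to an integer matrix `M`. -/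
def QF {n : ℕ} (M : Matrix (Fin n) (Fin n) ℤ) (b : Fin n → ℤ) : ℤ :=
  dotProduct b (M.mulVec b)


lemma eFun_add (q : ℕ) (x y : ℤ) : eFun q (x + y) = eFun q x * eFun q y := by
  rw [eFun, eFun, eFun, ← Complex.exp_add]
  congr 1; push_cast; ring

lemma eFun_dvd_eq_one (q : ℕ) (x : ℤ) (h : (q:ℤ) ∣ x) : eFun q x = 1 := by
  rcases eq_or_ne q 0 with rfl | hq
  · simp only [Int.natCast_zero, zero_dvd_iff] at h
    simp [eFun, h]
  · obtain ⟨k, rfl⟩ := h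
    rw [eFun]
    have hq' : (q : ℂ) ≠ 0 := Nat.cast_ne_zero.mpr hq
    have : (2 * ↑π * Complex.I * ((q:ℤ) * k : ℤ) / q) = (k:ℂ) * (2*π*Complex.I) := by
      push_cast; field_simp
    rw [this]
    exact Complex.exp_int_mul_two_pi_mul_I k

lemma eFun_ne_one (q : ℕ) (hq : q ≠ 0) (x : ℤ) (h : ¬ (q:ℤ) ∣ x) : eFun q x ≠ 1 := by
  intro h1
  apply h
  rw [eFun, Complex.exp_eq_one_iff] at h1
  obtain ⟨k, hk⟩ := h1
  have hq' : (q : ℂ) ≠ 0 := Nat.cast_ne_zero.mpr hq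
  have hI : (2 * (π:ℂ) * Complex.I) ≠ 0 := by
    simp [Real.pi_ne_zero, Complex.I_ne_zero]
  have hx : (x : ℂ) = (k : ℂ) * q := by
    field_simp at hk
    apply mul_left_cancel₀ hI
    linear_combination (2 * (π:ℂ) * Complex.I) * hk
  have hxz : x = k * q := by exact_mod_cast hx
  exact ⟨k, by linarith⟩

lemma eFun_scale (s q : ℕ) (hs : s ≠ 0) (x : ℤ) : eFun (s*q) ((s:ℤ)*x) = eFun q x := by
  rw [eFun, eFun]
  congr 1
  have hs' : (s:ℂ) ≠ 0 := Nat.cast_ne_zero.mpr hs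
  push_cast
  rcases eq_or_ne q 0 with rfl | hq
  · simp
  · have hq' : (q:ℂ) ≠ 0 := Nat.cast_ne_zero.mpr hq
    field_simp

lemma eFun_nat_mul (q t : ℕ) (x : ℤ) : eFun q ((t:ℤ) * x) = eFun q x ^ t := by
  rw [eFun, eFun, ← Complex.exp_nat_mul]
  congr 1; push_cast; ring

lemma abs_eFun (q : ℕ) (x : ℤ) : ‖eFun q x‖ = 1 := by
  rw [eFun, Complex.norm_exp]
  have : (2 * ↑π * Complex.I * ↑x / ↑q).re = 0 := by
    simp [Complex.div_re]
  rw [this, Real.exp_zero]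

lemma geom_eFun (q : ℕ) (hq : q ≠ 0) (c : ℤ) :
    ∑ t ∈ Finset.range q, eFun q ((t:ℤ) * c) = if (q:ℤ) ∣ c then (q:ℂ) else 0 := by
  simp only [eFun_nat_mul]
  by_cases h : (q:ℤ) ∣ c
  · simp [eFun_dvd_eq_one q c h, h]
  · rw [if_neg h]
    have hz : eFun q c ≠ 1 := eFun_ne_one q hq c h
    rw [geom_sum_eq hz]
    have : eFun q c ^ q = 1 := by
      rw [← eFun_nat_mul]
      exact eFun_dvd_eq_one q _ ⟨c, rfl⟩
    simp [this]

lemma QF_expand {n : ℕ} (M : Matrix (Fin n) (Fin n) ℤ) (hsym : M.IsSymm)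
    (x y : Fin n → ℤ) (c : ℤ) :
    QF M (fun i => x i + c * y i)
      = QF M x + 2 * c * (∑ i, y i * (M.mulVec x i)) + c^2 * QF M y := by
  have hM : ∀ i k, M i k = M k i := fun i k => (Matrix.IsSymm.apply hsym k i)
  simp only [QF, dotProduct, Matrix.mulVec, Finset.mul_sum]
  have key : ∑ i, ∑ k, x i * (M i k * (c * y k)) = ∑ i, ∑ k, (c * y i) * (M i k * x k) := by
    rw [Finset.sum_comm]
    apply Finset.sum_congr rfl; intro i _
    apply Finset.sum_congr rfl; intro k _
    rw [hM k i]; ring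
  have expand :
      ∑ i, ∑ k, (x i + c * y i) * (M i k * (x k + c * y k))
        = (∑ i, ∑ k, x i * (M i k * x k)) + (∑ i, ∑ k, x i * (M i k * (c * y k)))
          + (∑ i, ∑ k, (c * y i) * (M i k * x k)) + (∑ i, ∑ k, (c * y i) * (M i k * (c * y k))) := by
    simp only [← Finset.sum_add_distrib]
    exact Finset.sum_congr rfl fun i _ => Finset.sum_congr rfl fun k _ => by ring
  rw [expand, key]
  simp only [← Finset.sum_add_distrib]
  exact Finset.sum_congr rfl fun i _ => Finset.sum_congr rfl fun k _ => by ring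

/-- For a prime `p`, `r ≥ 1`, `j = ⌈r/2⌉`, a symmetric integer matrix `M`, `a`
coprime to `p`, and `m ∈ ℤⁿ`:
`|∑_{b mod p^r} e_{p^r}(a bᵀMb + b·m)| ≤ p^{n(r-j)} ⋅ #{b₁ mod p^j : 2aMb₁ + m ≡ 0 mod p^{r-j}}`. -/
theorem stmt_6 {n : ℕ} (p : ℕ) (hp : p.Prime) (r j : ℕ) (hr : 1 ≤ r)
    (hj : j = (r + 1) / 2) (M : Matrix (Fin n) (Fin n) ℤ) (hsym : M.IsSymm)
    (a : ℤ) (ha : IsCoprime a (p : ℤ)) (m : Fin n → ℤ) :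
    ‖(∑ b ∈ Fintype.piFinset fun _ : Fin n => Finset.range (p ^ r),
          eFun (p ^ r) (a * QF M (fun i => (b i : ℤ)) + ∑ i, (b i : ℤ) * m i))‖ ≤
      (p : ℝ) ^ (n * (r - j)) *
        ((Fintype.piFinset fun _ : Fin n => Finset.range (p ^ j)).filter
          (fun b₁ => ∀ i, ((p : ℤ) ^ (r - j)) ∣
            (2 * a * M.mulVec (fun i => (b₁ i : ℤ)) i + m i))).card := by
  have hp2 : 2 ≤ p := hp.two_le
  have hjr : j ≤ r := by omega
  have hs0 : p ^ j ≠ 0 := pow_ne_zero _ (by omega)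
  have hq0 : p ^ (r - j) ≠ 0 := pow_ne_zero _ (by omega)
  have hprj : p ^ r = p ^ j * p ^ (r - j) := by rw [← pow_add]; congr 1; omega
  set f : (Fin n → ℕ) → ℂ := fun b =>
    eFun (p ^ r) (a * QF M (fun i => (b i : ℤ)) + ∑ i, (b i : ℤ) * m i) with hf
  have step1 : (∑ b ∈ Fintype.piFinset fun _ : Fin n => Finset.range (p ^ r), f b)
      = ∑ z ∈ (Fintype.piFinset fun _ : Fin n => Finset.range (p ^ j)) ×ˢ
            (Fintype.piFinset fun _ : Fin n => Finset.range (p ^ (r - j))),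
          f (fun i => z.1 i + p ^ j * z.2 i) := by
    apply Finset.sum_nbij' (i := fun b => ((fun i => b i % p ^ j), (fun i => b i / p ^ j)))
      (j := fun z => fun i => z.1 i + p ^ j * z.2 i)
    · intro b hb
      simp only [Fintype.mem_piFinset, Finset.mem_range] at hb ⊢
      rw [Finset.mem_product]
      constructor <;> simp only [Fintype.mem_piFinset, Finset.mem_range] <;> intro i
      · exact Nat.mod_lt _ (by positivity)
      · rw [Nat.div_lt_iff_lt_mul (by positivity : 0 < p ^ j)]
        calc b i < p ^ r := hb i
          _ = p ^ (r - j) * p ^ j := by rw [← pow_add]; congr 1; omega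
    · intro z hz
      rw [Finset.mem_product] at hz
      obtain ⟨h1, h2⟩ := hz
      simp only [Fintype.mem_piFinset, Finset.mem_range] at h1 h2 ⊢
      intro i
      have hmulsucc : p ^ j * (z.2 i + 1) = p ^ j * z.2 i + p ^ j := by ring
      calc z.1 i + p ^ j * z.2 i < p ^ j * (z.2 i + 1) := by
            have := h1 i; omega
        _ ≤ p ^ j * p ^ (r - j) := Nat.mul_le_mul_left _ (h2 i)
        _ = p ^ r := hprj.symm
    · intro b _
      funext i
      exact Nat.mod_add_div _ _
    · intro z hz
      rw [Finset.mem_product] at hz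
      obtain ⟨h1, h2⟩ := hz
      simp only [Fintype.mem_piFinset, Finset.mem_range] at h1 h2
      have e1 : (fun i => (z.1 i + p ^ j * z.2 i) % p ^ j) = z.1 := by
        funext i
        rw [Nat.add_mul_mod_self_left]
        exact Nat.mod_eq_of_lt (h1 i)
      have e2 : (fun i => (z.1 i + p ^ j * z.2 i) / p ^ j) = z.2 := by
        funext i
        rw [Nat.add_mul_div_left _ _ (by positivity : 0 < p ^ j)]
        rw [Nat.div_eq_of_lt (h1 i)]
        exact Nat.zero_add _
      exact Prod.ext e1 e2
    · intro b _
      congr 1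
      funext i
      exact (Nat.mod_add_div _ _).symm
  rw [step1, Finset.sum_product]
  have step2 : ∀ b₁ b₂ : Fin n → ℕ,
      f (fun i => b₁ i + p ^ j * b₂ i)
        = eFun (p ^ r) (a * QF M (fun i => (b₁ i : ℤ)) + ∑ i, (b₁ i : ℤ) * m i) *
          eFun (p ^ (r - j)) (∑ i, (b₂ i : ℤ) *
            (2 * a * M.mulVec (fun i => (b₁ i : ℤ)) i + m i)) := by
    intro b₁ b₂
    simp only [hf]
    have hcast : ∀ i : Fin n, ((b₁ i + p ^ j * b₂ i : ℕ) : ℤ)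
        = (b₁ i : ℤ) + (p:ℤ)^j * (b₂ i : ℤ) := by
      intro i; push_cast; ring
    simp only [hcast]
    have hQF := QF_expand M hsym (fun i => (b₁ i : ℤ)) (fun i => (b₂ i : ℤ)) ((p:ℤ)^j)
    have h3 : (p:ℤ)^r * (p:ℤ)^(2*j - r) = ((p:ℤ)^j)^2 := by
      rw [← pow_mul, ← pow_add]; congr 1; omega
    have hexp : a * QF M (fun i => (b₁ i : ℤ) + (p:ℤ)^j * (b₂ i : ℤ))
          + ∑ i, ((b₁ i : ℤ) + (p:ℤ)^j * (b₂ i : ℤ)) * m i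
        = (a * QF M (fun i => (b₁ i : ℤ)) + ∑ i, (b₁ i : ℤ) * m i)
          + (p:ℤ)^j * (∑ i, (b₂ i : ℤ) * (2 * a * M.mulVec (fun i => (b₁ i : ℤ)) i + m i))
          + (p:ℤ)^r * ((p:ℤ)^(2*j - r) * (a * QF M (fun i => (b₂ i : ℤ)))) := by
      have h1 : ∑ i, ((b₁ i : ℤ) + (p:ℤ)^j * (b₂ i : ℤ)) * m i
          = (∑ i, (b₁ i : ℤ) * m i) + (p:ℤ)^j * ∑ i, (b₂ i : ℤ) * m i := by
        rw [Finset.mul_sum, ← Finset.sum_add_distrib]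
        exact Finset.sum_congr rfl fun i _ => by ring
      have h2 : ∑ i, (b₂ i : ℤ) * (2 * a * M.mulVec (fun i => (b₁ i : ℤ)) i + m i)
          = 2 * a * (∑ i, (b₂ i : ℤ) * M.mulVec (fun i => (b₁ i : ℤ)) i)
            + ∑ i, (b₂ i : ℤ) * m i := by
        rw [Finset.mul_sum, ← Finset.sum_add_distrib]
        exact Finset.sum_congr rfl fun i _ => by ring
      rw [hQF, h1, h2]
      linear_combination (a * QF M (fun i => (b₂ i : ℤ))) * h3.symm
    rw [hexp, eFun_add, eFun_add]
    have hdvd : ((p ^ r : ℕ) : ℤ) ∣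
        ((p:ℤ)^r * ((p:ℤ)^(2*j - r) * (a * QF M (fun i => (b₂ i : ℤ))))) :=
      ⟨(p:ℤ)^(2*j - r) * (a * QF M (fun i => (b₂ i : ℤ))), by push_cast; ring⟩
    have hlast : eFun (p ^ r)
        ((p:ℤ)^r * ((p:ℤ)^(2*j - r) * (a * QF M (fun i => (b₂ i : ℤ))))) = 1 :=
      eFun_dvd_eq_one _ _ hdvd
    have hmid : eFun (p ^ r)
        ((p:ℤ)^j * (∑ i, (b₂ i : ℤ) * (2 * a * M.mulVec (fun i => (b₁ i : ℤ)) i + m i)))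
        = eFun (p ^ (r - j))
            (∑ i, (b₂ i : ℤ) * (2 * a * M.mulVec (fun i => (b₁ i : ℤ)) i + m i)) := by
      rw [hprj]
      rw [← eFun_scale (p ^ j) (p ^ (r - j)) hs0
        (∑ i, (b₂ i : ℤ) * (2 * a * M.mulVec (fun i => (b₁ i : ℤ)) i + m i))]
      congr 1
    rw [hlast, hmid]
    ring
  simp only [step2]
  have eFun_sum : ∀ (q : ℕ) (F : Fin n → ℤ), eFun q (∑ i, F i) = ∏ i, eFun q (F i) := by
    intro q F
    have key : ∀ s : Finset (Fin n), eFun q (∑ i ∈ s, F i) = ∏ i ∈ s, eFun q (F i) := by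
      intro s
      induction s using Finset.cons_induction with
      | empty => simp [eFun_dvd_eq_one q 0 (dvd_zero _)]
      | cons i s hi ih => rw [Finset.sum_cons, Finset.prod_cons, eFun_add, ih]
    exact key _
  have step3 : ∀ b₁ : Fin n → ℕ,
      (∑ b₂ ∈ Fintype.piFinset fun _ : Fin n => Finset.range (p ^ (r - j)),
        eFun (p ^ (r - j)) (∑ i, (b₂ i : ℤ) *
          (2 * a * M.mulVec (fun i => (b₁ i : ℤ)) i + m i)))
      = if (∀ i, ((p : ℤ) ^ (r - j)) ∣ (2 * a * M.mulVec (fun i => (b₁ i : ℤ)) i + m i))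
          then ((p : ℂ) ^ (r - j)) ^ n else 0 := by
    intro b₁
    set c : Fin n → ℤ := fun i => 2 * a * M.mulVec (fun i => (b₁ i : ℤ)) i + m i with hc
    have h5 : ∀ b₂ ∈ Fintype.piFinset fun _ : Fin n => Finset.range (p ^ (r - j)),
        eFun (p ^ (r - j)) (∑ i, (b₂ i : ℤ) * c i)
          = ∏ i, eFun (p ^ (r - j)) ((b₂ i : ℤ) * c i) :=
      fun b₂ _ => eFun_sum _ _
    rw [Finset.sum_congr rfl h5,
      Finset.sum_prod_piFinset (Finset.range (p ^ (r - j)))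
        (fun i t => eFun (p ^ (r - j)) ((t:ℤ) * c i))]
    have h6 : ∀ i : Fin n, (∑ t ∈ Finset.range (p ^ (r - j)), eFun (p ^ (r - j)) ((t:ℤ) * c i))
        = if ((p:ℤ) ^ (r - j)) ∣ c i then ((p:ℂ) ^ (r - j)) else 0 := by
      intro i
      rw [geom_eFun _ hq0 (c i)]
      simp only [Nat.cast_pow]
    rw [Finset.prod_congr rfl fun i _ => h6 i]
    by_cases hall : ∀ i, ((p:ℤ) ^ (r - j)) ∣ c i
    · have hall' : ∀ i, ((p:ℤ) ^ (r - j)) ∣ 2 * a * M.mulVec (fun i => (b₁ i : ℤ)) i + m i := hall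
      simp [hall, hall']
    · rw [if_neg hall]
      push_neg at hall
      obtain ⟨i, hi⟩ := hall
      exact Finset.prod_eq_zero (Finset.mem_univ i) (by rw [if_neg hi])
  have step3' : ∀ b₁ ∈ Fintype.piFinset fun _ : Fin n => Finset.range (p ^ j),
      (∑ b₂ ∈ Fintype.piFinset fun _ : Fin n => Finset.range (p ^ (r - j)),
          eFun (p ^ r) (a * QF M (fun i => (b₁ i : ℤ)) + ∑ i, (b₁ i : ℤ) * m i) *
          eFun (p ^ (r - j)) (∑ i, (b₂ i : ℤ) *
            (2 * a * M.mulVec (fun i => (b₁ i : ℤ)) i + m i)))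
      = eFun (p ^ r) (a * QF M (fun i => (b₁ i : ℤ)) + ∑ i, (b₁ i : ℤ) * m i) *
        (if (∀ i, ((p : ℤ) ^ (r - j)) ∣ (2 * a * M.mulVec (fun i => (b₁ i : ℤ)) i + m i))
          then ((p : ℂ) ^ (r - j)) ^ n else 0) := by
    intro b₁ _
    rw [← Finset.mul_sum, step3 b₁]
  rw [Finset.sum_congr rfl step3']
  refine le_trans (norm_sum_le _ _) ?_
  have habs : ∀ b₁ ∈ Fintype.piFinset fun _ : Fin n => Finset.range (p ^ j),
      ‖(eFun (p ^ r) (a * QF M (fun i => (b₁ i : ℤ)) + ∑ i, (b₁ i : ℤ) * m i) *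
        (if (∀ i, ((p : ℤ) ^ (r - j)) ∣ (2 * a * M.mulVec (fun i => (b₁ i : ℤ)) i + m i))
          then ((p : ℂ) ^ (r - j)) ^ n else 0))‖
      = (if (∀ i, ((p : ℤ) ^ (r - j)) ∣ (2 * a * M.mulVec (fun i => (b₁ i : ℤ)) i + m i))
          then ((p : ℝ) ^ (r - j)) ^ n else 0) := by
    intro b₁ _
    rw [norm_mul, abs_eFun, one_mul]
    split_ifs
    · rw [norm_pow, norm_pow, Complex.norm_natCast]
    · simp
  rw [Finset.sum_congr rfl habs, ← Finset.sum_filter, Finset.sum_const, nsmul_eq_mul]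
  have hpw : (p:ℝ) ^ (n * (r - j)) = ((p:ℝ) ^ (r - j)) ^ n := by
    rw [← pow_mul, Nat.mul_comm]
  rw [hpw, mul_comm]
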